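/- Let n ≥ 2 with unique decomposition n = a·f_t + b·f_{t-1}, 1 ≤ a ≤ b ≤ f_t, t ≥ 2. Then 0 < φ^{−t}·(φ·b − a) ≤ φ/√5 < 1. -/

import Mathlib

noncomputable def phi : ℝ := (1 + Real.sqrt 5) / 2

theorem stmt13 (n : ℤ) (hn : 2 ≤ n) (a b : ℤ) (t : ℕ) (ht : 2 ≤ t)
    (ha : 1 ≤ a) (hab : a ≤ b) (hb : b ≤ (Nat.fib t : ℤ))
    (hdec : n = a * (Nat.fib t : ℤ) + b * (Nat.fib (t - 1) : ℤ)) :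
    0 < phi ^ (-(t : ℤ)) * (phi * b - a) ∧
    phi ^ (-(t : ℤ)) * (phi * b - a) ≤ phi / Real.sqrt 5 ∧
    phi / Real.sqrt 5 < 1 := by
  have hphi : phi = Real.goldenRatio := rfl
  set s := Real.sqrt 5 with hs
  have hs0 : (0:ℝ) < s := Real.sqrt_pos.mpr (by norm_num)
  have hs2 : s ^ 2 = 5 := Real.sq_sqrt (by norm_num)
  have hsgt : 2 < s := by nlinarith
  have hg1 : (1:ℝ) < phi := hphi ▸ Real.one_lt_goldenRatio
  have hg2 : phi < 2 := hphi ▸ Real.goldenRatio_lt_two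
  have hg0 : (0:ℝ) < phi := by linarith
  have hgp : (0:ℝ) < phi ^ t := pow_pos hg0 t
  have hzpow : phi ^ (-(t:ℤ)) = (phi ^ t)⁻¹ := by
    rw [zpow_neg, zpow_natCast]
  have ha1 : (1:ℝ) ≤ (a:ℝ) := by exact_mod_cast ha
  have habR : (a:ℝ) ≤ (b:ℝ) := by exact_mod_cast hab
  have hb1 : (1:ℝ) ≤ (b:ℝ) := le_trans ha1 habR
  have hpos : 0 < phi * b - a := by nlinarith
  have hlast : phi / s < 1 := by
    rw [div_lt_one hs0]; nlinarith
  refine ⟨?_, ?_, hlast⟩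
  · rw [hzpow]
    exact mul_pos (by positivity) hpos
  · have hfib : (Nat.fib t : ℝ) = (phi ^ t - Real.goldenConj ^ t) / s := by
      rw [hphi]; exact Real.coe_fib_eq t
    have hbR : (b:ℝ) ≤ (Nat.fib t : ℝ) := by exact_mod_cast hb
    have hψabs : |Real.goldenConj| < 1 :=
      abs_lt.mpr ⟨Real.neg_one_lt_goldenConj, by linarith [Real.goldenConj_neg]⟩
    have hψt : -1 ≤ Real.goldenConj ^ t ∧ Real.goldenConj ^ t ≤ 1 := by
      have h := pow_le_one₀ (abs_nonneg Real.goldenConj) hψabs.le (n := t)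
      rw [← abs_pow] at h
      exact abs_le.mp h
    have key : phi * b - a ≤ phi ^ t * (phi / s) := by
      have h1 : phi * (b:ℝ) - a ≤ phi * (Nat.fib t : ℝ) - 1 := by nlinarith
      rw [hfib] at h1
      have h2 : phi * ((phi ^ t - Real.goldenConj ^ t) / s) - 1 ≤ phi ^ t * (phi / s) := by
        rw [mul_div_assoc', mul_div_assoc', sub_le_iff_le_add, div_add' _ _ _ hs0.ne',
          div_le_div_iff₀ hs0 hs0]
        nlinarith [hψt.1, mul_pos hg0 hs0, mul_le_mul_of_nonneg_right (mul_le_mul_of_nonneg_left hψt.1 hg0.le) hs0.le]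
      linarith
    rw [hzpow, inv_mul_le_iff₀ hgp]
    exact key
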